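/- Let 𝒜 and ℬ be disjoint regions of 𝕊, let A be a full specification of 𝒜 and B a full specification of ℬ, and suppose A ∩ B ≠ ∅. Then A ∩ B is a full specification of 𝒜 ⊔ ℬ. -/
import Mathlib


open Set MeasureTheory

/-- A least-domain-of-decidability function `dom : Σ → 𝒫(𝕊)`, with its four
defining properties (i)–(iv).  Events are the measurable subsets of `Ω`. -/
structure DomSystem (Ω S : Type*) [MeasurableSpace Ω] where
  dom : Set Ω → Set S
  /-- (i): for a countable family of events whose domains are pairwise disjoint,
  the domain of the intersection is the (disjoint) union of the domains. -/
  prop_i : ∀ Λ : Set (Set Ω), Λ.Countable → (∀ X ∈ Λ, MeasurableSet X) →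
    (∀ X ∈ Λ, ∀ Y ∈ Λ, X ≠ Y → Disjoint (dom X) (dom Y)) →
    dom (⋂₀ Λ) = ⋃ X ∈ Λ, dom X
  /-- (ii): for a countable family of events all having the same domain `D`,
  the domain of the intersection is contained in `D`. -/
  prop_ii : ∀ (Λ : Set (Set Ω)) (D : Set S), Λ.Countable →
    (∀ X ∈ Λ, MeasurableSet X) → (∀ X ∈ Λ, dom X = D) → dom (⋂₀ Λ) ⊆ D
  /-- (iii): complementation preserves the domain. -/
  prop_iii : ∀ X : Set Ω, MeasurableSet X → dom Xᶜ = dom X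
  /-- (iv): an event whose domain is a disjoint union `𝒳 ⊔ 𝒴` lies in the σ-algebra
  generated by `Γ(𝒳) ∪ Γ(𝒴)`, where `Γ(𝒳) = {X ∈ Σ : dom X ⊆ 𝒳}`. -/
  prop_iv : ∀ Z : Set Ω, MeasurableSet Z → ∀ 𝒳 𝒴 : Set S, Disjoint 𝒳 𝒴 →
    dom Z = 𝒳 ∪ 𝒴 →
    MeasurableSet[MeasurableSpace.generateFrom
      ({X : Set Ω | MeasurableSet X ∧ dom X ⊆ 𝒳} ∪
        {X : Set Ω | MeasurableSet X ∧ dom X ⊆ 𝒴})] Z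

/-- A full specification of a region `R ⊆ 𝕊`: a nonempty event `F` with `dom F ⊆ R`
that decides every event decidable within `R`. -/
def IsFullSpec {Ω S : Type*} [MeasurableSpace Ω] (dom : Set Ω → Set S)
    (R : Set S) (F : Set Ω) : Prop :=
  MeasurableSet F ∧ F.Nonempty ∧ dom F ⊆ R ∧
    ∀ X : Set Ω, MeasurableSet X → dom X ⊆ R → F ⊆ X ∨ F ⊆ Xᶜ

/-- The σ-algebra of sets decided by `F`. -/
def decidedBy {Ω : Type*} (F : Set Ω) : MeasurableSpace Ω where
  MeasurableSet' := fun Z => F ⊆ Z ∨ F ⊆ Zᶜ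
  measurableSet_empty := Or.inr (by simp)
  measurableSet_compl := by
    intro Z hZ
    rcases hZ with h | h
    · exact Or.inr (by simpa using h)
    · exact Or.inl h
  measurableSet_iUnion := by
    intro f hf
    by_cases h : ∃ n, F ⊆ f n
    · obtain ⟨n, hn⟩ := h
      exact Or.inl (hn.trans (Set.subset_iUnion f n))
    · push_neg at h
      refine Or.inr ?_
      rw [Set.compl_iUnion]
      refine Set.subset_iInter fun n => ?_
      rcases hf n with h' | h'
      · exact absurd h' (h n)
      · exact h'

/-- Lemma 1: if `𝒜` and `ℬ` are disjoint regions, `A`, `B` are full specifications of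
them respectively, and `A ∩ B` is nonempty, then `A ∩ B` is a full specification of
`𝒜 ⊔ ℬ`. -/
theorem stmt4 {Ω S : Type*} [MeasurableSpace Ω] (D : DomSystem Ω S)
    (𝒜 ℬ : Set S) (hAB : Disjoint 𝒜 ℬ) (A B : Set Ω)
    (hA : IsFullSpec D.dom 𝒜 A) (hB : IsFullSpec D.dom ℬ B)
    (hne : (A ∩ B).Nonempty) :
    IsFullSpec D.dom (𝒜 ∪ ℬ) (A ∩ B) := by
  obtain ⟨hAm, hAne, hAdom, hAdec⟩ := hA
  obtain ⟨hBm, hBne, hBdom, hBdec⟩ := hB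
  refine ⟨hAm.inter hBm, hne, ?_, ?_⟩
  · -- dom (A ∩ B) ⊆ 𝒜 ∪ ℬ
    by_cases hEq : A = B
    · subst hEq
      rw [inter_self]
      exact hAdom.trans (subset_union_left)
    · have hsInter : ⋂₀ ({A, B} : Set (Set Ω)) = A ∩ B := by
        simp [sInter_insert]
      have := D.prop_i {A, B} ((Set.finite_singleton B).insert A).countable
        (by rintro X (rfl | rfl) <;> assumption)
        (by
          rintro X (rfl | rfl) Y (rfl | rfl) hne'
          · exact absurd rfl hne'
          · exact hAB.mono hAdom hBdom
          · exact (hAB.mono hAdom hBdom).symm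
          · exact absurd rfl hne')
      rw [hsInter] at this
      rw [this]
      rintro s hs
      simp only [mem_iUnion] at hs
      obtain ⟨X, hX, hsX⟩ := hs
      rcases hX with rfl | rfl
      · exact Or.inl (hAdom hsX)
      · exact Or.inr (hBdom hsX)
  · -- the deciding property
    intro X hXm hXdom
    set F := A ∩ B with hF
    -- apply prop_iv with 𝒳 = dom X ∩ 𝒜, 𝒴 = dom X ∩ ℬ
    have hsplit : D.dom X = (D.dom X ∩ 𝒜) ∪ (D.dom X ∩ ℬ) := by
      rw [← inter_union_distrib_left]
      exact (inter_eq_left.mpr hXdom).symm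
    have hdisj : Disjoint (D.dom X ∩ 𝒜) (D.dom X ∩ ℬ) :=
      (hAB.mono inter_subset_right inter_subset_right)
    have hiv := D.prop_iv X hXm _ _ hdisj hsplit
    have hle : MeasurableSpace.generateFrom
        ({Z : Set Ω | MeasurableSet Z ∧ D.dom Z ⊆ D.dom X ∩ 𝒜} ∪
          {Z : Set Ω | MeasurableSet Z ∧ D.dom Z ⊆ D.dom X ∩ ℬ}) ≤ decidedBy F := by
      refine MeasurableSpace.generateFrom_le ?_
      rintro Z (⟨hZm, hZd⟩ | ⟨hZm, hZd⟩)
      · rcases hAdec Z hZm (hZd.trans inter_subset_right) with h | h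
        · exact Or.inl ((inter_subset_left).trans h)
        · exact Or.inr ((inter_subset_left).trans h)
      · rcases hBdec Z hZm (hZd.trans inter_subset_right) with h | h
        · exact Or.inl ((inter_subset_right).trans h)
        · exact Or.inr ((inter_subset_right).trans h)
    exact hle X hiv
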